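/- Let D be a finite set of gambles avoiding sure loss, and for a gamble g let β* be the optimal value of the LP: minimize β subject to Σᵢ λᵢ fᵢ(ω) − β ≤ −g(ω) for all ω ∈ Ω, λᵢ ≥ 0 (β free). Then for any δ > 0, the set D ∪ {g − β* − δ} does not avoid sure loss. -/
import Mathlib


theorem adding_below_upper_ext_loses {Ω : Type*} [Fintype Ω] [Nonempty Ω]
    (n : ℕ) (f : Fin n → Ω → ℝ)
    (hASL : ∀ lam : Fin n → ℝ, (∀ i, 0 ≤ lam i) →
      ∃ ω : Ω, 0 ≤ ∑ i, lam i * f i ω)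
    (g : Ω → ℝ) (β : ℝ)
    (hβlb : ∀ lam : Fin n → ℝ, (∀ i, 0 ≤ lam i) →
      β ≤ Finset.univ.sup' Finset.univ_nonempty
        (fun ω => g ω + ∑ i, lam i * f i ω))
    (hβatt : ∃ lam : Fin n → ℝ, (∀ i, 0 ≤ lam i) ∧
      Finset.univ.sup' Finset.univ_nonempty
        (fun ω => g ω + ∑ i, lam i * f i ω) = β)
    (δ : ℝ) (hδ : 0 < δ) :
    ∃ (μ₀ : ℝ) (μ : Fin n → ℝ), 0 ≤ μ₀ ∧ (∀ i, 0 ≤ μ i) ∧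
      ∀ ω : Ω, μ₀ * (g ω - β - δ) + ∑ i, μ i * f i ω < 0 := by
  obtain ⟨lam, hlam, hsup⟩ := hβatt
  refine ⟨1, lam, zero_le_one, hlam, fun ω => ?_⟩
  have h := Finset.le_sup' (fun ω => g ω + ∑ i, lam i * f i ω) (Finset.mem_univ ω)
  rw [hsup] at h
  nlinarith
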